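/- Let p ≥ 1, let X_1, …, X_{p+1} : Ω → ℝ^p be Borel-measurable random vectors on a probability space (Ω, 𝒜, ℙ), and let x ∈ ℝ^p. Then the sets { ω ∈ Ω : min_{1≤i≤p+1} ⟨u, X_i(ω)⟩ ≤ ⟨u, x⟩ ≤ max_{1≤i≤p+1} ⟨u, X_i(ω)⟩ for all u ∈ 𝕊^{p−1} } and { ω ∈ Ω : x ∈ convexHull{X_1(ω), …, X_{p+1}(ω)} } coincide; in particular this set is measurable and ℙ( x ∈ convexHull{X_1, …, X_{p+1}} ) = ℙ( ⟨u,x⟩ ∈ [min_i ⟨u,X_i⟩, max_i ⟨u,X_i⟩] for all u ∈ 𝕊^{p−1} ). -/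

import Mathlib

open scoped RealInnerProductSpace
open MeasureTheory

lemma key_equiv (p : ℕ) (v : Fin (p + 1) → EuclideanSpace ℝ (Fin p))
    (x : EuclideanSpace ℝ (Fin p)) :
    (∀ u : EuclideanSpace ℝ (Fin p), ‖u‖ = 1 →
        Finset.univ.inf' Finset.univ_nonempty (fun i => ⟪u, v i⟫) ≤ ⟪u, x⟫ ∧
        ⟪u, x⟫ ≤ Finset.univ.sup' Finset.univ_nonempty (fun i => ⟪u, v i⟫)) ↔
      x ∈ convexHull ℝ (Set.range v) := by
  constructor
  · intro h
    by_contra hx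
    have hclosed : IsClosed (convexHull ℝ (Set.range v)) :=
      ((Set.finite_range v).isCompact_convexHull (𝕜 := ℝ)).isClosed
    obtain ⟨f, s, hfs, hsb⟩ :=
      geometric_hahn_banach_point_closed (convex_convexHull ℝ _) hclosed hx
    set y := (InnerProductSpace.toDual ℝ (EuclideanSpace ℝ (Fin p))).symm f with hy
    have hyz : ∀ z, ⟪y, z⟫ = f z := fun z => InnerProductSpace.toDual_symm_apply
    have hy0 : y ≠ 0 := by
      intro h0
      have h1 := hsb (v 0) (subset_convexHull ℝ _ ⟨0, rfl⟩)
      have e1 : f x = 0 := by rw [← hyz x, h0, inner_zero_left]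
      have e2 : f (v 0) = 0 := by rw [← hyz (v 0), h0, inner_zero_left]
      rw [e1] at hfs; rw [e2] at h1; linarith
    set u := ‖y‖⁻¹ • y with hu
    have hun : ‖u‖ = 1 := by
      rw [hu, norm_smul, norm_inv, norm_norm, inv_mul_cancel₀ (norm_ne_zero_iff.2 hy0)]
    have hlt : ∀ i, ⟪u, x⟫ < ⟪u, v i⟫ := by
      intro i
      have h1 : ⟪y, x⟫ < ⟪y, v i⟫ := by
        rw [hyz, hyz]
        exact lt_trans hfs (hsb _ (subset_convexHull ℝ _ ⟨i, rfl⟩))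
      have hpos : (0:ℝ) < ‖y‖⁻¹ := inv_pos.2 (norm_pos_iff.2 hy0)
      simp only [hu, real_inner_smul_left]
      exact mul_lt_mul_of_pos_left h1 hpos
    obtain ⟨h1, _⟩ := h u hun
    obtain ⟨i, _, hi⟩ := Finset.exists_mem_eq_inf' Finset.univ_nonempty
      (fun i => ⟪u, v i⟫)
    rw [hi] at h1
    exact absurd h1 (not_le.2 (hlt i))
  · intro hx u hu
    constructor
    · have hsub : convexHull ℝ (Set.range v) ⊆
          {y | Finset.univ.inf' Finset.univ_nonempty (fun i => ⟪u, v i⟫) ≤ ⟪u, y⟫} := by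
        apply convexHull_min
        · rintro _ ⟨i, rfl⟩
          exact Finset.inf'_le (fun j => ⟪u, v j⟫) (Finset.mem_univ i)
        · exact convex_halfSpace_ge (innerSL ℝ u).toLinearMap.isLinear _
      exact hsub hx
    · have hsub : convexHull ℝ (Set.range v) ⊆
          {y | ⟪u, y⟫ ≤ Finset.univ.sup' Finset.univ_nonempty (fun i => ⟪u, v i⟫)} := by
        apply convexHull_min
        · rintro _ ⟨i, rfl⟩
          exact Finset.le_sup' (fun j => ⟪u, v j⟫) (Finset.mem_univ i)
        · exact convex_halfSpace_le (innerSL ℝ u).toLinearMap.isLinear _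
      exact hsub hx

/-- Proposition 6 (naive simplicial fuzzy depth of a point reduces to simplicial depth):
the event that the projection of `x` on every unit direction lies between the minimum and
maximum of the projections of `X 0 ω, …, X p ω` coincides with the event that `x` lies in the
convex hull of `{X 0 ω, …, X p ω}`; in particular this event is measurable and both events
have the same probability. -/
theorem stmt15 {Ω : Type*} [MeasurableSpace Ω] (μ : Measure Ω) [IsProbabilityMeasure μ]
    (p : ℕ) (hp : 1 ≤ p) (X : Fin (p + 1) → Ω → EuclideanSpace ℝ (Fin p))
    (hX : ∀ i, Measurable (X i)) (x : EuclideanSpace ℝ (Fin p)) :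
    {ω : Ω | ∀ u : EuclideanSpace ℝ (Fin p), ‖u‖ = 1 →
        Finset.univ.inf' Finset.univ_nonempty (fun i => ⟪u, X i ω⟫) ≤ ⟪u, x⟫ ∧
        ⟪u, x⟫ ≤ Finset.univ.sup' Finset.univ_nonempty (fun i => ⟪u, X i ω⟫)} =
      {ω : Ω | x ∈ convexHull ℝ (Set.range fun i => X i ω)} ∧
    MeasurableSet {ω : Ω | x ∈ convexHull ℝ (Set.range fun i => X i ω)} ∧
    μ {ω : Ω | x ∈ convexHull ℝ (Set.range fun i => X i ω)} =
      μ {ω : Ω | ∀ u : EuclideanSpace ℝ (Fin p), ‖u‖ = 1 →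
        Finset.univ.inf' Finset.univ_nonempty (fun i => ⟪u, X i ω⟫) ≤ ⟪u, x⟫ ∧
        ⟪u, x⟫ ≤ Finset.univ.sup' Finset.univ_nonempty (fun i => ⟪u, X i ω⟫)} := by
  have hset : {ω : Ω | ∀ u : EuclideanSpace ℝ (Fin p), ‖u‖ = 1 →
        Finset.univ.inf' Finset.univ_nonempty (fun i => ⟪u, X i ω⟫) ≤ ⟪u, x⟫ ∧
        ⟪u, x⟫ ≤ Finset.univ.sup' Finset.univ_nonempty (fun i => ⟪u, X i ω⟫)} =
      {ω : Ω | x ∈ convexHull ℝ (Set.range fun i => X i ω)} :=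
    Set.ext fun ω => key_equiv p (fun i => X i ω) x
  refine ⟨hset, ?_, (congrArg μ hset).symm⟩
  rw [← hset]
  -- measurability via a countable dense subset of the sphere
  obtain ⟨D, hDc, hDd⟩ :=
    TopologicalSpace.exists_countable_dense {u : EuclideanSpace ℝ (Fin p) // ‖u‖ = 1}
  -- the per-direction event, in existential form
  set A : EuclideanSpace ℝ (Fin p) → Set Ω := fun u =>
    {ω | (∃ i, ⟪u, X i ω⟫ ≤ ⟪u, x⟫) ∧ (∃ i, ⟪u, x⟫ ≤ ⟪u, X i ω⟫)} with hA
  have hcond : ∀ (u : EuclideanSpace ℝ (Fin p)) (ω : Ω),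
      (Finset.univ.inf' Finset.univ_nonempty (fun i => ⟪u, X i ω⟫) ≤ ⟪u, x⟫ ∧
        ⟪u, x⟫ ≤ Finset.univ.sup' Finset.univ_nonempty (fun i => ⟪u, X i ω⟫)) ↔ ω ∈ A u := by
    intro u ω
    rw [hA]
    simp only [Set.mem_setOf_eq, Finset.inf'_le_iff, Finset.le_sup'_iff, Finset.mem_univ,
      true_and, exists_prop]
  have hAmeas : ∀ u, MeasurableSet (A u) := by
    intro u
    have hm : ∀ i, Measurable fun ω => ⟪u, X i ω⟫ := fun i =>
      ((continuous_const.inner continuous_id).measurable).comp (hX i)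
    have e : A u = (⋃ i, {ω | ⟪u, X i ω⟫ ≤ ⟪u, x⟫}) ∩ (⋃ i, {ω | ⟪u, x⟫ ≤ ⟪u, X i ω⟫}) := by
      rw [hA]; ext ω; simp [Set.mem_setOf_eq]
    rw [e]
    exact (MeasurableSet.iUnion fun i => measurableSet_le (hm i) measurable_const).inter
      (MeasurableSet.iUnion fun i => measurableSet_le measurable_const (hm i))
  have hEq : {ω : Ω | ∀ u : EuclideanSpace ℝ (Fin p), ‖u‖ = 1 →
        Finset.univ.inf' Finset.univ_nonempty (fun i => ⟪u, X i ω⟫) ≤ ⟪u, x⟫ ∧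
        ⟪u, x⟫ ≤ Finset.univ.sup' Finset.univ_nonempty (fun i => ⟪u, X i ω⟫)} =
      ⋂ d ∈ D, A d.val := by
    ext ω
    simp only [Set.mem_setOf_eq, Set.mem_iInter]
    constructor
    · intro h d _
      exact (hcond d.val ω).1 (h d.val d.2)
    · intro h u hu
      rw [hcond u ω]
      -- the set of directions satisfying the condition at ω is closed
      set T : Set (EuclideanSpace ℝ (Fin p)) :=
        {w | (∃ i, ⟪w, X i ω⟫ ≤ ⟪w, x⟫) ∧ (∃ i, ⟪w, x⟫ ≤ ⟪w, X i ω⟫)} with hT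
      have hTclosed : IsClosed T := by
        have e : T = (⋃ i, {w | ⟪w, X i ω⟫ ≤ ⟪w, x⟫}) ∩
            (⋃ i, {w | ⟪w, x⟫ ≤ ⟪w, X i ω⟫}) := by
          rw [hT]; ext w; simp [Set.mem_setOf_eq]
        rw [e]
        have hc : ∀ y : EuclideanSpace ℝ (Fin p),
            Continuous fun w : EuclideanSpace ℝ (Fin p) => ⟪w, y⟫ :=
          fun y => continuous_id.inner continuous_const
        exact ((isClosed_iUnion_of_finite fun i =>
            isClosed_le (hc (X i ω)) (hc x)).inter
          (isClosed_iUnion_of_finite fun i => isClosed_le (hc x) (hc (X i ω))))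
      have hmaps : Set.MapsTo (Subtype.val :
          {u : EuclideanSpace ℝ (Fin p) // ‖u‖ = 1} → EuclideanSpace ℝ (Fin p)) D T := by
        intro d hd
        exact h d hd
      have hu' : (⟨u, hu⟩ : {u : EuclideanSpace ℝ (Fin p) // ‖u‖ = 1}) ∈ closure D :=
        hDd.closure_eq ▸ Set.mem_univ _
      have : u ∈ closure T := map_mem_closure continuous_subtype_val hu' hmaps
      exact hTclosed.closure_subset this
  rw [hEq]
  exact MeasurableSet.biInter hDc fun d _ => hAmeas d.val
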